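/- Let h ∈ M_r(ℂ) be positive definite Hermitian and let θ ∈ M_r(ℂ) be arbitrary. Then tr( h·( θ(h⁻¹θ^†h − θ^†) − (h⁻¹θ^†h − θ^†)θ ) ) = ‖θh^{1/2} − hθh^{−1/2}‖_F²; in particular this trace is a nonnegative real number. (This is the identity tr(h[θ, θ^{*H} − θ^{*K}]) = |θh^{1/2} − hθh^{−1/2}|²_K, computed in a K-orthonormal frame, used in the proof of Proposition 3.5.) -/

import Mathlib

open Matrix
open scoped ComplexOrder

/-- The square root of a positive semidefinite matrix, as defined in the older Mathlib
(`Matrix.PosSemidef.sqrt`, since removed). -/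
noncomputable def Matrix.PosSemidef.sqrt {n : Type*} [Fintype n] [DecidableEq n] {𝕜 : Type*}
    [RCLike 𝕜] {A : Matrix n n 𝕜} (hA : A.PosSemidef) : Matrix n n 𝕜 :=
  hA.1.eigenvectorUnitary.1 * diagonal ((↑) ∘ Real.sqrt ∘ hA.1.eigenvalues) *
    (star hA.1.eigenvectorUnitary : Matrix n n 𝕜)

section PortSqrt
open scoped MatrixOrder

theorem Matrix.PosSemidef.sqrt_eq_cfcSqrt {n : Type*} [Fintype n] [DecidableEq n] {𝕜 : Type*}
    [RCLike 𝕜] {A : Matrix n n 𝕜} (hA : A.PosSemidef) : hA.sqrt = CFC.sqrt A := by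
  rw [CFC.sqrt_eq_cfc, cfc_nnreal_eq_real _ A, hA.1.cfc_eq]
  simp only [IsHermitian.cfc, Unitary.conjStarAlgAut_apply, Matrix.PosSemidef.sqrt]
  rw [show (fun x : ℝ => ((NNReal.sqrt x.toNNReal : NNReal) : ℝ)) = Real.sqrt from ?_]
  funext x
  simp only [Real.coe_sqrt, Real.coe_toNNReal']
  rcases le_total 0 x with hx | hx
  · rw [max_eq_left hx]
  · rw [max_eq_right hx, Real.sqrt_zero, Real.sqrt_eq_zero_of_nonpos hx]

theorem Matrix.PosSemidef.sqrt_mul_self {n : Type*} [Fintype n] [DecidableEq n] {𝕜 : Type*}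
    [RCLike 𝕜] {A : Matrix n n 𝕜} (hA : A.PosSemidef) : hA.sqrt * hA.sqrt = A := by
  rw [hA.sqrt_eq_cfcSqrt]
  exact CFC.sqrt_mul_sqrt_self A hA.nonneg

theorem Matrix.PosSemidef.posSemidef_sqrt {n : Type*} [Fintype n] [DecidableEq n] {𝕜 : Type*}
    [RCLike 𝕜] {A : Matrix n n 𝕜} (hA : A.PosSemidef) : hA.sqrt.PosSemidef := by
  rw [hA.sqrt_eq_cfcSqrt]
  exact (CFC.sqrt_nonneg A).posSemidef

theorem Matrix.PosSemidef.eq_sqrt_of_sq_eq {n : Type*} [Fintype n] [DecidableEq n] {𝕜 : Type*}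
    [RCLike 𝕜] {A : Matrix n n 𝕜} (hA : A.PosSemidef) (B : Matrix n n 𝕜) (hB : B.PosSemidef)
    (hAB : A ^ 2 = B) : A = hB.sqrt := by
  rw [hB.sqrt_eq_cfcSqrt, eq_comm, CFC.sqrt_eq_iff _ _ hB.nonneg hA.nonneg, ← sq, hAB]

end PortSqrt

/-- **Identity `tr(h[θ, θ^{*H} − θ^{*K}]) = |θh^{1/2} − hθh^{−1/2}|²_K` (proof of Prop. 3.5).**
For a positive definite Hermitian `h` and arbitrary `θ`, writing `A = h⁻¹θᴴh − θᴴ`,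
one has `tr(h·(θA − Aθ)) = ‖θh^{1/2} − hθh^{−1/2}‖_F²`; in particular this trace is
a nonnegative real number. -/
theorem trace_h_bracket_eq_sq_norm
    {r : ℕ} (h θ : Matrix (Fin r) (Fin r) ℂ) (hh : h.PosDef) :
    Matrix.trace (h * (θ * (h⁻¹ * θᴴ * h - θᴴ) - (h⁻¹ * θᴴ * h - θᴴ) * θ)) =
      Matrix.trace
        ((θ * hh.posSemidef.sqrt - h * θ * (hh.inv).posSemidef.sqrt) *
          (θ * hh.posSemidef.sqrt - h * θ * (hh.inv).posSemidef.sqrt)ᴴ) ∧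
    (Matrix.trace (h * (θ * (h⁻¹ * θᴴ * h - θᴴ) - (h⁻¹ * θᴴ * h - θᴴ) * θ))).im = 0 ∧
    0 ≤ (Matrix.trace (h * (θ * (h⁻¹ * θᴴ * h - θᴴ) - (h⁻¹ * θᴴ * h - θᴴ) * θ))).re := by
  set s := hh.posSemidef.sqrt with hs_def
  set t := (hh.inv).posSemidef.sqrt with ht_def
  have hss : s * s = h := hh.posSemidef.sqrt_mul_self
  have hsH : sᴴ = s := hh.posSemidef.posSemidef_sqrt.isHermitian
  have htH : tᴴ = t := (hh.inv).posSemidef.posSemidef_sqrt.isHermitian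
  have hH : hᴴ = h := hh.isHermitian
  have hsinv : s⁻¹ = t := by
    apply Matrix.PosSemidef.eq_sqrt_of_sq_eq hh.posSemidef.posSemidef_sqrt.inv
    rw [pow_two, ← Matrix.mul_inv_rev, hss]
  have hdet : IsUnit s.det := by
    have h2 : s.det * s.det = h.det := by rw [← Matrix.det_mul, hss]
    have hd := hh.det_pos.ne'
    exact isUnit_iff_ne_zero.mpr (fun hz => hd (by rw [← h2, hz, mul_zero]))
  have hst : s * t = 1 := by rw [← hsinv, Matrix.mul_nonsing_inv _ hdet]
  have hts : t * s = 1 := by rw [← hsinv, Matrix.nonsing_inv_mul _ hdet]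
  have htt : t * t = h⁻¹ := (hh.inv).posSemidef.sqrt_mul_self
  have hhinv : h * h⁻¹ = 1 := Matrix.mul_nonsing_inv _ hh.det_pos.ne'.isUnit
  set X := θ * s - h * θ * t with hX_def
  have key : Matrix.trace (h * (θ * (h⁻¹ * θᴴ * h - θᴴ) - (h⁻¹ * θᴴ * h - θᴴ) * θ)) =
      Matrix.trace (X * Xᴴ) := by
    have hXH : Xᴴ = s * θᴴ - t * θᴴ * h := by
      rw [hX_def, conjTranspose_sub, conjTranspose_mul, conjTranspose_mul, conjTranspose_mul,
        hsH, htH, hH, mul_assoc]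
    rw [hXH]
    have expand : X * (s * θᴴ - t * θᴴ * h) =
        θ * h * θᴴ - θ * θᴴ * h - h * θ * θᴴ + h * θ * h⁻¹ * θᴴ * h := by
      rw [hX_def]
      have e1 : θ * s * (s * θᴴ) = θ * h * θᴴ := by
        rw [mul_assoc θ s, ← mul_assoc s, hss, ← mul_assoc]
      have e2 : θ * s * (t * θᴴ * h) = θ * θᴴ * h := by
        rw [mul_assoc θ s, ← mul_assoc s, ← mul_assoc s, hst, one_mul]; noncomm_ring
      have e3 : h * θ * t * (s * θᴴ) = h * θ * θᴴ := by
        rw [mul_assoc _ t, ← mul_assoc t, hts, one_mul]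
      have e4 : h * θ * t * (t * θᴴ * h) = h * θ * h⁻¹ * θᴴ * h := by
        rw [mul_assoc _ t, ← mul_assoc t, ← mul_assoc t, htt]; noncomm_ring
      rw [sub_mul, mul_sub, mul_sub, e1, e2, e3, e4]; noncomm_ring
    rw [expand]
    have hA : h * (h⁻¹ * θᴴ * h - θᴴ) = θᴴ * h - h * θᴴ := by
      rw [mul_sub, ← mul_assoc, ← mul_assoc, hhinv, one_mul]
    have expL : h * (θ * (h⁻¹ * θᴴ * h - θᴴ) - (h⁻¹ * θᴴ * h - θᴴ) * θ) =
        h * θ * h⁻¹ * θᴴ * h - h * θ * θᴴ - θᴴ * h * θ + h * θᴴ * θ := by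
      rw [mul_sub h (θ * (h⁻¹ * θᴴ * h - θᴴ)) ((h⁻¹ * θᴴ * h - θᴴ) * θ),
        ← mul_assoc h (h⁻¹ * θᴴ * h - θᴴ) θ, hA]
      noncomm_ring
    rw [expL]
    simp only [Matrix.trace_add, Matrix.trace_sub]
    have c1 : Matrix.trace (θ * h * θᴴ) = Matrix.trace (h * θᴴ * θ) := by
      rw [mul_assoc, Matrix.trace_mul_comm, mul_assoc]
    have c2 : Matrix.trace (θ * θᴴ * h) = Matrix.trace (θᴴ * h * θ) := by
      rw [mul_assoc, Matrix.trace_mul_comm, mul_assoc]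
    rw [c1, c2]; ring
  have tr_form : Matrix.trace (X * Xᴴ) = ((∑ i, ∑ j, Complex.normSq (X i j) : ℝ) : ℂ) := by
    simp only [Matrix.trace, Matrix.diag, Matrix.mul_apply, Matrix.conjTranspose_apply]
    push_cast
    exact Finset.sum_congr rfl fun i _ => Finset.sum_congr rfl fun j _ => Complex.mul_conj _
  refine ⟨key, ?_, ?_⟩
  · rw [key, tr_form, Complex.ofReal_im]
  · rw [key, tr_form, Complex.ofReal_re]
    exact Finset.sum_nonneg fun i _ => Finset.sum_nonneg fun j _ => Complex.normSq_nonneg _
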